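/- Set λ := (1 − (n+1)L)^{-1}, so λ > 1. Then for every nonempty subset f ⊆ {0,…,n}: CR_f = Σ ∩ r_λ^{-1}(R_f). In particular r_λ(CR_f) ⊆ R_f ⊆ R_{≤f}. -/

import Mathlib

open Finset

noncomputable section

/-- The affine hyperplane `E = {t ∈ ℝ^{n+1} : ∑ tᵢ = 1}`. -/
def planeE (n : ℕ) : Set (Fin (n+1) → ℝ) := {t | ∑ i, t i = 1}

/-- The standard n-simplex `Σ = {t ∈ E : tᵢ ≥ 0 ∀ i}`. -/
def simplexS (n : ℕ) : Set (Fin (n+1) → ℝ) := {t | ∑ i, t i = 1 ∧ ∀ i, 0 ≤ t i}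

/-- `R_f = {t ∈ E : tᵢ ≥ 0 for i ∈ f, tᵢ ≤ 0 for i ∉ f}`. -/
def regionR (n : ℕ) (f : Finset (Fin (n+1))) : Set (Fin (n+1) → ℝ) :=
  {t | ∑ i, t i = 1 ∧ (∀ i ∈ f, 0 ≤ t i) ∧ ∀ i ∉ f, t i ≤ 0}

/-- `R_{≤f} = {t ∈ E : tᵢ ≤ 0 for i ∉ f}`. -/
def regionRle (n : ℕ) (f : Finset (Fin (n+1))) : Set (Fin (n+1) → ℝ) :=
  {t | ∑ i, t i = 1 ∧ ∀ i ∉ f, t i ≤ 0}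

/-- The face `|f| = {t ∈ Σ : tᵢ = 0 for i ∉ f}`. -/
def faceF (n : ℕ) (f : Finset (Fin (n+1))) : Set (Fin (n+1) → ℝ) :=
  {t | (∑ i, t i = 1 ∧ ∀ i, 0 ≤ t i) ∧ ∀ i ∉ f, t i = 0}

/-- `CR_f = {t ∈ Σ : tᵢ ≥ L for i ∈ f, tᵢ ≤ L for i ∉ f}`. -/
def regionCR (n : ℕ) (L : ℝ) (f : Finset (Fin (n+1))) : Set (Fin (n+1) → ℝ) :=
  {t | (∑ i, t i = 1 ∧ ∀ i, 0 ≤ t i) ∧ (∀ i ∈ f, L ≤ t i) ∧ ∀ i ∉ f, t i ≤ L}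

/-- The barycentre `ξ_f` of the face `|f|`. -/
def bary (n : ℕ) (f : Finset (Fin (n+1))) : Fin (n+1) → ℝ :=
  fun i => if i ∈ f then (f.card : ℝ)⁻¹ else 0

/-- The retraction `q : E → Σ`, `q(t) = [max(t₀,0),…,max(tₙ,0)]`. -/
def retr (n : ℕ) (t : Fin (n+1) → ℝ) : Fin (n+1) → ℝ :=
  fun i => (∑ j, max (t j) 0)⁻¹ * max (t i) 0

/-- The collapsing map `C_Σ : Σ → Σ`, `C_Σ(t) = [min(t₀,L),…,min(tₙ,L)]`. -/
def collapse (n : ℕ) (L : ℝ) (t : Fin (n+1) → ℝ) : Fin (n+1) → ℝ :=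
  fun i => (∑ j, min (t j) L)⁻¹ * min (t i) L

/-- The radial expansion `r_λ : E → E`. -/
def rexp (n : ℕ) (lam : ℝ) (t : Fin (n+1) → ℝ) : Fin (n+1) → ℝ :=
  fun i => lam * t i - (lam - 1) / ((n : ℝ) + 1)

/-- With λ = (1-(n+1)L)⁻¹ one has λ > 1 and CR_f = Σ ∩ r_λ⁻¹(R_f); in
particular r_λ(CR_f) ⊆ R_f ⊆ R_{≤f}. -/
theorem stmt13 (n : ℕ) (L lam : ℝ) (hL0 : 0 < L) (hL1 : L < 1 / ((n : ℝ) + 1))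
    (hlam : lam = (1 - ((n : ℝ) + 1) * L)⁻¹) :
    1 < lam ∧ ∀ f : Finset (Fin (n+1)), f.Nonempty →
      (regionCR n L f = simplexS n ∩ (rexp n lam) ⁻¹' (regionR n f) ∧
       (rexp n lam) '' (regionCR n L f) ⊆ regionR n f ∧
       regionR n f ⊆ regionRle n f) := by
  have hN : (0:ℝ) < (n:ℝ)+1 := by positivity
  have hNL : L * ((n:ℝ)+1) < 1 := (lt_div_iff₀ hN).mp hL1
  have hden : 0 < 1 - ((n:ℝ)+1)*L := by nlinarith
  have hlamval : lam * (1 - ((n:ℝ)+1)*L) = 1 := by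
    rw [hlam]; field_simp
  have hlam1 : 1 < lam := by
    rw [hlam]
    rw [one_lt_inv_iff₀]
    constructor
    · exact hden
    · nlinarith
  have hlampos : 0 < lam := lt_trans one_pos hlam1
  have hkey : (lam - 1)/((n:ℝ)+1) = lam * L := by
    rw [div_eq_iff (ne_of_gt hN)]; nlinarith
  have hre : ∀ (t : Fin (n+1) → ℝ) (i : Fin (n+1)), rexp n lam t i = lam * (t i - L) := by
    intro t i; simp only [rexp, hkey]; ring
  have hsum : ∀ t : Fin (n+1) → ℝ, ∑ i, t i = 1 → ∑ i, rexp n lam t i = 1 := by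
    intro t ht
    simp only [rexp, Finset.sum_sub_distrib, ← Finset.mul_sum, ht,
      Finset.sum_const, card_univ, Fintype.card_fin, nsmul_eq_mul]
    push_cast
    field_simp
    ring
  refine ⟨hlam1, fun f hf => ?_⟩
  have hset : regionCR n L f = simplexS n ∩ (rexp n lam) ⁻¹' (regionR n f) := by
    ext t
    simp only [regionCR, simplexS, regionR, Set.mem_setOf_eq, Set.mem_inter_iff,
      Set.mem_preimage]
    constructor
    · rintro ⟨⟨hs, hpos⟩, hge, hle⟩
      refine ⟨⟨hs, hpos⟩, hsum t hs, fun i hi => ?_, fun i hi => ?_⟩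
      · rw [hre]; nlinarith [hge i hi]
      · rw [hre]; nlinarith [hle i hi]
    · rintro ⟨⟨hs, hpos⟩, _, hge, hle⟩
      refine ⟨⟨hs, hpos⟩, fun i hi => ?_, fun i hi => ?_⟩
      · have h := hge i hi; rw [hre] at h; nlinarith
      · have h := hle i hi; rw [hre] at h; nlinarith
  refine ⟨hset, ?_, ?_⟩
  · rw [hset]
    rintro x ⟨t, ⟨_, ht⟩, rfl⟩
    exact ht
  · rintro t ⟨hs, _, hle⟩
    exact ⟨hs, hle⟩
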